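/- Let i ∈ ℕ with i ≥ 1, k ≥ 1, s ≥ 1. Then det [C(k+a-1, i+b-1)]_{1≤a,b≤s} = (∏_{j=0}^{s-1} (k+j)/(i+j)) · det [C(k+a-2, i+b-2)]_{1≤a,b≤s}. -/

import Mathlib

/-- Inductive step in van Zeipel's determinant computation: for `i, k, s ≥ 1`,
`det [C(k+a-1, i+b-1)]_{1≤a,b≤s} = (∏_{j=0}^{s-1} (k+j)/(i+j)) · det [C(k+a-2, i+b-2)]`,
where the matrices are indexed by `Fin s` (so `a - 1`, `b - 1` correspond to the
natural-number values of the indices) and the identity is computed in `ℚ`. -/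
theorem vanZeipel_inductive_step (i k s : ℕ) (hi : 1 ≤ i) (hk : 1 ≤ k) (hs : 1 ≤ s)
    (P P' : Matrix (Fin s) (Fin s) ℚ)
    (hP : ∀ a b : Fin s, P a b = (Nat.choose (k + a) (i + b) : ℚ))
    (hP' : ∀ a b : Fin s, P' a b = (Nat.choose (k - 1 + a) (i - 1 + b) : ℚ)) :
    P.det = (∏ j ∈ Finset.range s, ((k + j : ℚ) / (i + j : ℚ))) * P'.det := by
  have key : ∀ a b : Fin s, P a b = (k + a : ℚ) * P' a b * ((i + b : ℚ))⁻¹ := by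
    intro a b
    have hnat := Nat.add_one_mul_choose_eq (k - 1 + a) (i - 1 + b)
    have hk1 : k - 1 + (a : ℕ) + 1 = k + a := by omega
    have hi1 : i - 1 + (b : ℕ) + 1 = i + b := by omega
    simp only [Nat.succ_eq_add_one, hk1, hi1] at hnat
    have hib : (0 : ℚ) < (i : ℚ) + b := by positivity
    have hq : ((k + a : ℕ) : ℚ) * P' a b = ((i + b : ℕ) : ℚ) * P a b := by
      rw [hP, hP']
      have := congrArg (fun n : ℕ => (n : ℚ)) hnat
      push_cast at this ⊢
      linarith [this]
    rw [hP, hP'] at hq ⊢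
    push_cast at hq ⊢
    field_simp
    linarith [hq]
  have hPeq : P = Matrix.diagonal (fun a : Fin s => ((k : ℚ) + a)) *
      (P' * Matrix.diagonal (fun b : Fin s => ((i : ℚ) + b)⁻¹)) := by
    ext a b
    rw [Matrix.diagonal_mul, Matrix.mul_diagonal, key a b]
    ring
  rw [hPeq, Matrix.det_mul, Matrix.det_mul, Matrix.det_diagonal, Matrix.det_diagonal]
  rw [Fin.prod_univ_eq_prod_range (fun j => ((k : ℚ) + j)),
    Fin.prod_univ_eq_prod_range (fun j => ((i : ℚ) + j)⁻¹)]
  rw [Finset.prod_div_distrib, div_eq_mul_inv, Finset.prod_inv_distrib]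
  ring
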